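/- arXiv:2511.14316 — 2 statements merged into one kernel-verified Lean document; each statement's English description precedes it below -/
import Mathlib

section
/- Let f ∈ ℂ[x,y]_d, let β_1, …, β_r ∈ ℂ be pairwise distinct with 1 ≤ r ≤ d+1, and suppose f(x,y) = Σ_{k=1}^{r} λ_k (x+β_k y)^d with λ_1, …, λ_r ∈ ℂ. Then for each fixed i with 1 ≤ i ≤ r, one has λ_i ≠ 0 if and only if ∏_{ℓ≠i} (∂y − β_ℓ ∂x) ∘ f ≠ 0. -/
open MvPolynomial

/-- The linear form `x + β y` in `ℂ[x,y]`. -/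
noncomputable def linForm (β : ℂ) : MvPolynomial (Fin 2) ℂ := X 0 + C β * X 1

/-- The first-order differential operator `∂y − β ∂x` acting on `ℂ[x,y]`. -/
noncomputable def Dop (β : ℂ) : Module.End ℂ (MvPolynomial (Fin 2) ℂ) :=
  (pderiv (1 : Fin 2)).toLinearMap - β • (pderiv (0 : Fin 2)).toLinearMap

lemma Dop_linForm_pow (b γ : ℂ) (n : ℕ) :
    Dop b (linForm γ ^ (n+1)) = C ((γ - b) * (n+1)) * linForm γ ^ n := by
  simp [Dop, linForm, pderiv_pow, smul_eq_C_mul, map_mul, map_sub, map_add, map_natCast, map_one]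
  ring

lemma linForm_ne_zero (γ : ℂ) : linForm γ ≠ 0 := by
  intro h
  have := congrArg (eval fun j : Fin 2 => if j = 0 then (1:ℂ) else 0) h
  simp [linForm] at this

lemma list_apply (γ : ℂ) (L : List ℂ) (d : ℕ) (h : L.length ≤ d) :
    (L.map Dop).prod (linForm γ ^ d)
      = C ((d.descFactorial L.length : ℂ) * (L.map (fun b => γ - b)).prod)
          * linForm γ ^ (d - L.length) := by
  induction L with
  | nil => simp
  | cons b L ih =>
    have hL : L.length ≤ d := by simp at h; omega
    have hd : d - L.length = (d - (b :: L).length) + 1 := by simp at h ⊢; omega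
    simp only [List.map_cons, List.prod_cons, Module.End.mul_apply, ih hL, hd]
    rw [← smul_eq_C_mul, map_smul, Dop_linForm_pow, smul_eq_C_mul, ← mul_assoc, ← map_mul]
    congr 2
    rw [List.length_cons, Nat.descFactorial_succ]
    push_cast [Nat.cast_sub hL]
    simp at h ⊢
    ring_nf
    rw [Nat.cast_sub (by omega)]
    push_cast
    ring


/-- Suppose `f = Σ_{k=1}^{r} λ_k (x+β_k y)^d` with `β_1, …, β_r` pairwise distinct and
`1 ≤ r ≤ d+1`. Then for each fixed `i`, `λ_i ≠ 0` if and only if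
`∏_{ℓ≠i} (∂y − β_ℓ ∂x) ∘ f ≠ 0`. -/
theorem apolarity_coeff_nonzero_iff (d r : ℕ) (hr : 1 ≤ r) (hrd : r ≤ d + 1)
    (f : MvPolynomial (Fin 2) ℂ) (hf : f.IsHomogeneous d)
    (β : Fin r → ℂ) (hβ : Function.Injective β) (lam : Fin r → ℂ)
    (hsum : f = ∑ k, C (lam k) * (linForm (β k)) ^ d) (i : Fin r) :
    lam i ≠ 0 ↔
      (((Finset.univ.erase i).toList).map fun ℓ => Dop (β ℓ)).prod f ≠ 0 := by
  classical
  set L := (Finset.univ.erase i).toList with hLdef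
  have hmem : ∀ k : Fin r, k ≠ i → k ∈ L := fun k hk => by
    simp [hLdef, Finset.mem_toList, Finset.mem_erase, hk]
  have hlen : L.length = r - 1 := by
    simp [hLdef, Finset.length_toList, Finset.card_erase_of_mem]
  have hlend : L.length ≤ d := by omega
  have key : ∀ k : Fin r,
      ((L.map fun ℓ => Dop (β ℓ)).prod) (C (lam k) * linForm (β k) ^ d)
        = lam k • (C ((d.descFactorial L.length : ℂ) *
            ((L.map β).map (fun b => β k - b)).prod) * linForm (β k) ^ (d - L.length)) := by
    intro k
    rw [← smul_eq_C_mul, map_smul]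
    congr 1
    have h2 := list_apply (β k) (L.map β) d (by simpa using hlend)
    simpa [List.map_map, Function.comp_def] using h2
  rw [hsum, map_sum, Finset.sum_eq_single i ?side (by simp)]
  case side =>
    intro k _ hk
    rw [key k]
    have h0 : ((L.map β).map (fun b => β k - b)).prod = 0 := by
      apply List.prod_eq_zero
      exact List.mem_map.2 ⟨β k, List.mem_map.2 ⟨k, hmem k hk, rfl⟩, sub_self _⟩
    rw [h0]
    simp
  rw [key i]
  have hc : ((d.descFactorial L.length : ℕ) : ℂ) ≠ 0 := by
    exact_mod_cast fun h => absurd (Nat.descFactorial_eq_zero_iff_lt.1 h) (by omega)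
  have hP : ((L.map β).map (fun b => β i - b)).prod ≠ 0 := by
    apply List.prod_ne_zero
    intro h0
    obtain ⟨b, hb, hb0⟩ := List.mem_map.1 h0
    obtain ⟨ℓ, hℓ, rfl⟩ := List.mem_map.1 hb
    have hℓi : ℓ ≠ i := (Finset.mem_erase.1 (Finset.mem_toList.1 hℓ)).1
    exact hℓi (hβ (sub_eq_zero.1 hb0).symm)
  have hnz : C ((d.descFactorial L.length : ℂ) *
      ((L.map β).map (fun b => β i - b)).prod) * linForm (β i) ^ (d - L.length) ≠ 0 :=
    mul_ne_zero (by simpa using mul_ne_zero hc hP) (pow_ne_zero _ (linForm_ne_zero _))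
  rw [smul_ne_zero_iff]
  exact (and_iff_left hnz).symm
end

section
/- Let f ∈ ℂ[x,y]_d be a nonzero binary form of degree d ≥ 1 and let f_x = ∂f/∂x. Then FR(f) ≥ WR(f) ≥ FR(f_x) ≥ WR(f) − 1. -/
open MvPolynomial

/-- The Waring rank of a binary form `f ∈ ℂ[x,y]_d`: the least `r` such that
`f = Σ_{k=1}^{r} λ_k L_k^d` with all `λ_k ∈ ℂ∖{0}` and `L_k` linear forms. -/
noncomputable def waringRank (d : ℕ) (f : MvPolynomial (Fin 2) ℂ) : ℕ :=
  sInf {r : ℕ | ∃ (lam : Fin r → ℂ) (L : Fin r → MvPolynomial (Fin 2) ℂ),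
    (∀ k, lam k ≠ 0) ∧ (∀ k, (L k).IsHomogeneous 1) ∧ f = ∑ k, C (lam k) * (L k) ^ d}

/-- The F-rank of a binary form `f ∈ ℂ[x,y]_d`: the least `r ≥ 0` such that
`f = Σ_{k=1}^{r} λ_k (x+β_k y)^d` for some `λ_k, β_k ∈ ℂ`. -/
noncomputable def fRank (d : ℕ) (f : MvPolynomial (Fin 2) ℂ) : ℕ :=
  sInf {r : ℕ | ∃ lam β : Fin r → ℂ, f = ∑ k, C (lam k) * (linForm (β k)) ^ d}

open Finset Matrix

/-- The exponent vector `(a, b)` for `x^a y^b`. -/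
noncomputable def E (a b : ℕ) : Fin 2 →₀ ℕ := Finsupp.single 0 a + Finsupp.single 1 b

@[simp] lemma E_apply0 (a b : ℕ) : E a b 0 = a := by
  simp [E, Finsupp.single_apply]

@[simp] lemma E_apply1 (a b : ℕ) : E a b 1 = b := by
  simp [E, Finsupp.single_apply]

lemma eq_E (m : Fin 2 →₀ ℕ) : m = E (m 0) (m 1) := by
  ext i
  fin_cases i <;> simp

lemma degree_E (m : Fin 2 →₀ ℕ) : m.degree = m 0 + m 1 := by
  rw [Finsupp.degree_apply, Finset.sum_subset (Finset.subset_univ m.support)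
    (by intro x _ hx; simpa using Finsupp.notMem_support_iff.mp hx), Fin.sum_univ_two]

/-- A binary form of degree `d` is the sum of its `d+1` monomials. -/
lemma homog_decomp {d : ℕ} {f : MvPolynomial (Fin 2) ℂ} (hf : f.IsHomogeneous d) :
    f = ∑ j ∈ range (d+1), monomial (E (d-j) j) (coeff (E (d-j) j) f) := by
  apply MvPolynomial.ext
  intro m
  rw [coeff_sum]
  simp only [coeff_monomial]
  by_cases hm : m 0 + m 1 = d
  · have hmE : m = E (d - (m 1)) (m 1) := by
      ext i
      fin_cases i <;> simp <;> omega
    rw [Finset.sum_eq_single (m 1)]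
    · rw [if_pos hmE.symm, ← hmE]
    · intro j _ hj
      rw [if_neg]
      intro h
      apply hj
      have := congrArg (fun e => e 1) h
      simpa using this
    · intro h
      exact absurd (by omega : m 1 < d + 1) (by simpa using h)
  · have h0 : coeff m f = 0 := by
      apply hf.coeff_eq_zero
      rw [degree_E m]; exact hm
    rw [h0, Finset.sum_eq_zero]
    intro j hj
    rw [if_neg]
    intro h
    apply hm
    rw [← h] at *
    simp only [E_apply0, E_apply1]
    have : j ≤ d := by simpa using Nat.lt_succ_iff.mp (Finset.mem_range.mp hj)
    omega

/-- Binomial expansion of a power of a linear form. -/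
lemma linForm_pow (β : ℂ) (d : ℕ) :
    (linForm β) ^ d = ∑ j ∈ range (d+1), monomial (E (d-j) j) (β ^ j * (d.choose j : ℂ)) := by
  rw [linForm, add_comm (X 0), add_pow]
  apply Finset.sum_congr rfl
  intro j hj
  rw [mul_pow, ← C_pow, X_pow_eq_monomial, X_pow_eq_monomial,
    C_mul_monomial, monomial_mul,
    show ((d.choose j : ℕ) : MvPolynomial (Fin 2) ℂ) = C ((d.choose j : ℕ) : ℂ) by simp,
    mul_comm _ (C _), C_mul_monomial, E]
  congr 1
  · rw [add_comm]
  · ring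

/-- Every binary form of degree `d` is a linear combination of `d+1` powers of
linear forms `x + k y`, `k = 0, …, d` (Vandermonde interpolation). -/
lemma exists_fr {d : ℕ} {f : MvPolynomial (Fin 2) ℂ} (hf : f.IsHomogeneous d) :
    ∃ lam β : Fin (d+1) → ℂ, f = ∑ k, C (lam k) * (linForm (β k)) ^ d := by
  set M : Matrix (Fin (d+1)) (Fin (d+1)) ℂ := fun j k => (k : ℂ) ^ (j : ℕ) * (d.choose j : ℂ)
    with hM
  set a : Fin (d+1) → ℂ := fun j => coeff (E (d - (j : ℕ)) j) f with ha
  have hdet : IsUnit M.det := by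
    have hMeq : M = (Matrix.diagonal (fun j : Fin (d+1) => (d.choose (j : ℕ) : ℂ))) *
        (Matrix.vandermonde (fun k : Fin (d+1) => (k : ℂ)))ᵀ := by
      ext j k
      simp [Matrix.mul_apply, Matrix.diagonal, Matrix.vandermonde, hM, mul_comm,
        Matrix.mul_diagonal, Matrix.diagonal_mul]
    rw [hMeq, Matrix.det_mul, Matrix.det_transpose, Matrix.det_vandermonde,
      Matrix.det_diagonal]
    apply IsUnit.mul <;> rw [isUnit_iff_ne_zero, Finset.prod_ne_zero_iff]
    · intro j _
      have : 0 < d.choose (j : ℕ) := Nat.choose_pos (by omega)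
      exact_mod_cast this.ne'
    · intro i _
      rw [Finset.prod_ne_zero_iff]
      intro j hj
      have hij : i < j := Finset.mem_Ioi.mp hj
      have : (i : ℕ) < (j : ℕ) := hij
      have : ((i : ℕ) : ℂ) ≠ ((j : ℕ) : ℂ) := by
        exact_mod_cast this.ne
      exact sub_ne_zero.mpr (Ne.symm this)
  refine ⟨M⁻¹.mulVec a, fun k => (k : ℂ), ?_⟩
  have hMc : M.mulVec (M⁻¹.mulVec a) = a := by
    rw [Matrix.mulVec_mulVec, Matrix.mul_nonsing_inv _ hdet, Matrix.one_mulVec]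
  set c : Fin (d+1) → ℂ := M⁻¹.mulVec a with hc
  calc f = ∑ j ∈ range (d+1), monomial (E (d-j) j) (coeff (E (d-j) j) f) := homog_decomp hf
    _ = ∑ j : Fin (d+1), monomial (E (d-(j : ℕ)) j) (a j) := by
        rw [← Fin.sum_univ_eq_sum_range (fun j => monomial (E (d-j) j) (coeff (E (d-j) j) f))]
    _ = ∑ j : Fin (d+1), monomial (E (d-(j : ℕ)) j) (M.mulVec c j) := by rw [hMc]
    _ = ∑ k : Fin (d+1), C (c k) * (linForm ((k : ℕ) : ℂ)) ^ d := by
        have step : ∀ k : Fin (d+1), C (c k) * linForm ((k : ℕ) : ℂ) ^ d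
            = ∑ j : Fin (d+1), monomial (E (d-(j : ℕ)) (j : ℕ)) (M j k * c k) := by
          intro k
          rw [linForm_pow, Finset.mul_sum,
            ← Fin.sum_univ_eq_sum_range
              (fun j => C (c k) * monomial (E (d-j) j) ((((k : ℕ) : ℂ)) ^ j * (d.choose j : ℂ)))]
          apply Finset.sum_congr rfl
          intro j _
          rw [C_mul_monomial, hM, mul_comm]
        rw [Finset.sum_congr rfl (fun k _ => step k), Finset.sum_comm]
        apply Finset.sum_congr rfl
        intro j _
        rw [← map_sum]
        congr 1

/-- Dropping the zero coefficients from a decomposition into powers of linear forms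
yields a Waring decomposition. -/
lemma drop_zeros {d r : ℕ} {f : MvPolynomial (Fin 2) ℂ} (lam : Fin r → ℂ)
    (L : Fin r → MvPolynomial (Fin 2) ℂ) (hL : ∀ k, (L k).IsHomogeneous 1)
    (h : f = ∑ k, C (lam k) * (L k) ^ d) :
    ∃ n, n ≤ r ∧ ∃ (lam' : Fin n → ℂ) (L' : Fin n → MvPolynomial (Fin 2) ℂ),
      (∀ k, lam' k ≠ 0) ∧ (∀ k, (L' k).IsHomogeneous 1) ∧
      f = ∑ k, C (lam' k) * (L' k) ^ d := by
  classical
  set s : Finset (Fin r) := univ.filter (fun k => lam k ≠ 0) with hs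
  refine ⟨s.card, by simpa [hs] using Finset.card_filter_le univ (fun k => lam k ≠ 0), ?_⟩
  have e : Fin s.card ≃ {x // x ∈ s} := (Fintype.equivFinOfCardEq (Fintype.card_coe s)).symm
  refine ⟨fun i => lam (e i), fun i => L (e i), ?_, fun i => hL _, ?_⟩
  · intro i
    exact (Finset.mem_filter.mp (e i).2).2
  · rw [h, ← Finset.sum_filter_add_sum_filter_not univ (fun k => lam k ≠ 0)
      (fun k => C (lam k) * L k ^ d)]
    have h2 : ∑ k ∈ univ.filter (fun k => ¬ lam k ≠ 0), C (lam k) * L k ^ d = 0 := by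
      apply Finset.sum_eq_zero; intro k hk
      rw [Finset.mem_filter] at hk
      simp [not_not.mp hk.2]
    rw [h2, add_zero, ← hs, ← Finset.sum_attach s (fun k => C (lam k) * L k ^ d)]
    exact (Equiv.sum_comp e (fun x : {x // x ∈ s} => C (lam x.1) * L x.1 ^ d)).symm

/-- Structure of a linear binary form. -/
lemma lin_struct {L : MvPolynomial (Fin 2) ℂ} (hL : L.IsHomogeneous 1) :
    ∃ a b : ℂ, L = C a * X 0 + C b * X 1 := by
  have := homog_decomp hL
  rw [show (1:ℕ)+1 = 2 from rfl, Finset.sum_range_succ, Finset.sum_range_one] at this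
  refine ⟨coeff (E 1 0) L, coeff (E 0 1) L, ?_⟩
  conv_lhs => rw [this]
  have e1 : E 1 0 = Finsupp.single 0 1 := by simp [E]
  have e2 : E 0 1 = Finsupp.single 1 1 := by simp [E]
  norm_num
  rw [e1, e2, ← C_mul_X_pow_eq_monomial, ← C_mul_X_pow_eq_monomial, pow_one, pow_one]

lemma isHomogeneous_linForm (β : ℂ) : (linForm β).IsHomogeneous 1 := by
  have h1 : (X 0 : MvPolynomial (Fin 2) ℂ).IsHomogeneous 1 := isHomogeneous_X _ _
  have h2 : (C β * X 1 : MvPolynomial (Fin 2) ℂ).IsHomogeneous 1 := by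
    simpa using (isHomogeneous_C (Fin 2) β).mul (isHomogeneous_X ℂ (1 : Fin 2))
  exact h1.add h2

lemma pderiv_linForm (β : ℂ) : pderiv (0 : Fin 2) (linForm β) = 1 := by
  rw [linForm]
  simp [pderiv_C_mul]

/-- A binary form of degree `d` killed by `∂/∂x` is a multiple of `y^d`. -/
lemma eq_C_mul_Y_pow {d : ℕ} {h : MvPolynomial (Fin 2) ℂ} (hh : h.IsHomogeneous d)
    (hd : pderiv (0 : Fin 2) h = 0) : ∃ cc : ℂ, h = C cc * X 1 ^ d := by
  have hdec := homog_decomp hh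
  refine ⟨coeff (E 0 d) h, ?_⟩
  have key : ∀ j ∈ range d, coeff (E (d-j) j) h = 0 := by
    intro j hj
    have hjd : j < d := Finset.mem_range.mp hj
    have hder : pderiv (0 : Fin 2) h
        = ∑ i ∈ range (d+1), monomial (E (d-i) i - Finsupp.single 0 1)
            (coeff (E (d-i) i) h * ((d-i : ℕ) : ℂ)) := by
      conv_lhs => rw [hdec]
      rw [map_sum]
      apply Finset.sum_congr rfl
      intro i _
      rw [pderiv_monomial]
      simp
    have hco := congrArg (coeff (E (d-1-j) j)) hd.symm
    rw [hder, coeff_sum] at hco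
    simp only [coeff_monomial] at hco
    rw [Finset.sum_eq_single j] at hco
    · rw [if_pos] at hco
      · have hcast : ((d - j : ℕ) : ℂ) ≠ 0 := by
          have : 0 < d - j := by omega
          exact_mod_cast this.ne'
        rcases mul_eq_zero.mp hco.symm with h1 | h1
        · exact h1
        · exact absurd h1 hcast
      · ext i
        fin_cases i <;> simp [Finsupp.single_apply] <;> omega
    · intro i hi hij
      rw [if_neg]
      intro hemem
      apply hij
      have := congrArg (fun e => e 1) hemem
      simpa [Finsupp.single_apply] using this
    · intro hj'
      exact absurd (Finset.mem_range.mpr (by omega)) hj'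
  conv_lhs => rw [hdec]
  rw [Finset.sum_range_succ, Finset.sum_eq_zero (fun j hj => by rw [key j hj]; simp),
    zero_add, Nat.sub_self, C_mul_X_pow_eq_monomial,
    show E 0 d = Finsupp.single 1 d by simp [E]]

/-- For a nonzero binary form `f ∈ ℂ[x,y]_d`, `d ≥ 1`, with `f_x = ∂f/∂x`:
`FR(f) ≥ WR(f) ≥ FR(f_x) ≥ WR(f) − 1`. -/
theorem fRank_waringRank_inequalities (d : ℕ) (hd : 1 ≤ d) (f : MvPolynomial (Fin 2) ℂ)
    (hf : f.IsHomogeneous d) (hf0 : f ≠ 0) :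
    waringRank d f ≤ fRank d f ∧
      fRank (d - 1) (pderiv (0 : Fin 2) f) ≤ waringRank d f ∧
      waringRank d f - 1 ≤ fRank (d - 1) (pderiv (0 : Fin 2) f) := by
  classical
  -- the F-rank set of f is nonempty
  obtain ⟨lam₀, β₀, hfr₀⟩ := exists_fr hf
  have hFRne : {r : ℕ | ∃ lam β : Fin r → ℂ,
      f = ∑ k, C (lam k) * (linForm (β k)) ^ d}.Nonempty := ⟨d+1, lam₀, β₀, hfr₀⟩
  -- membership at the infimum
  obtain ⟨lam₁, β₁, hfr₁⟩ : ∃ lam β : Fin (fRank d f) → ℂ,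
      f = ∑ k, C (lam k) * (linForm (β k)) ^ d := Nat.sInf_mem hFRne
  -- the Waring set of f is nonempty (drop zeros from the F-decomposition at the inf)
  obtain ⟨n₁, hn₁le, lam₂, L₂, hlam₂, hL₂, hdec₂⟩ :=
    drop_zeros lam₁ (fun k => linForm (β₁ k)) (fun k => isHomogeneous_linForm _) hfr₁
  have hWRne : {r : ℕ | ∃ (lam : Fin r → ℂ) (L : Fin r → MvPolynomial (Fin 2) ℂ),
      (∀ k, lam k ≠ 0) ∧ (∀ k, (L k).IsHomogeneous 1) ∧
      f = ∑ k, C (lam k) * (L k) ^ d}.Nonempty := ⟨n₁, lam₂, L₂, hlam₂, hL₂, hdec₂⟩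
  -- Part 1 : WR(f) ≤ FR(f)
  have part1 : waringRank d f ≤ fRank d f := by
    have h1 : waringRank d f ≤ n₁ := Nat.sInf_le ⟨lam₂, L₂, hlam₂, hL₂, hdec₂⟩
    exact h1.trans hn₁le
  -- a Waring decomposition at the infimum
  obtain ⟨lam₃, L₃, hlam₃, hL₃, hdec₃⟩ :
      ∃ (lam : Fin (waringRank d f) → ℂ) (L : Fin (waringRank d f) → MvPolynomial (Fin 2) ℂ),
      (∀ k, lam k ≠ 0) ∧ (∀ k, (L k).IsHomogeneous 1) ∧
      f = ∑ k, C (lam k) * (L k) ^ d := Nat.sInf_mem hWRne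
  -- Part 2 : FR(f_x) ≤ WR(f)
  choose av bv hab using fun k => lin_struct (hL₃ k)
  have hdnz : ((d : ℕ) : ℂ) ≠ 0 := by
    exact_mod_cast (by omega : 0 < d).ne'
  obtain ⟨lam', β', hfx⟩ : ∃ lam' β' : Fin (waringRank d f) → ℂ,
      pderiv (0 : Fin 2) f = ∑ k, C (lam' k) * (linForm (β' k)) ^ (d-1) := by
    refine ⟨fun k => if av k = 0 then 0 else lam₃ k * d * (av k) ^ d,
      fun k => if av k = 0 then 0 else bv k / av k, ?_⟩
    conv_lhs => rw [hdec₃]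
    rw [map_sum]
    apply Finset.sum_congr rfl
    intro k _
    rw [pderiv_C_mul, pderiv_pow]
    have hpL : pderiv (0 : Fin 2) (L₃ k) = C (av k) := by
      rw [hab k]
      simp [pderiv_C_mul]
    rw [hpL]
    by_cases hak : av k = 0
    · simp [hak]
    · have hLk : L₃ k = C (av k) * linForm (bv k / av k) := by
        rw [hab k, linForm, mul_add, ← mul_assoc, ← C_mul,
          mul_div_cancel₀ _ hak]
      have hpow : av k ^ (d-1) * av k = av k ^ d := by
        rw [← pow_succ]
        congr 1
        omega
      simp only [if_neg hak]
      rw [hLk, mul_pow, ← C_pow,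
        show ((d : ℕ) : MvPolynomial (Fin 2) ℂ) = C ((d : ℕ) : ℂ) by simp,
        ← hpow]
      simp only [C_mul]
      ring
  have part2 : fRank (d - 1) (pderiv (0 : Fin 2) f) ≤ waringRank d f :=
    Nat.sInf_le ⟨lam', β', hfx⟩
  -- Part 3 : WR(f) - 1 ≤ FR(f_x)
  have hFRxne : {r : ℕ | ∃ lam β : Fin r → ℂ,
      pderiv (0 : Fin 2) f = ∑ k, C (lam k) * (linForm (β k)) ^ (d-1)}.Nonempty :=
    ⟨waringRank d f, lam', β', hfx⟩
  set r₄ := fRank (d-1) (pderiv (0 : Fin 2) f) with hr₄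
  obtain ⟨lam₄, β₄, hfx₄⟩ : ∃ lam β : Fin r₄ → ℂ,
      pderiv (0 : Fin 2) f = ∑ k, C (lam k) * (linForm (β k)) ^ (d-1) :=
    Nat.sInf_mem hFRxne
  have hpg : pderiv (0 : Fin 2)
      (∑ k : Fin r₄, C (lam₄ k / d) * (linForm (β₄ k)) ^ d) = pderiv (0 : Fin 2) f := by
    rw [map_sum, hfx₄]
    apply Finset.sum_congr rfl
    intro k _
    rw [pderiv_C_mul, pderiv_pow, pderiv_linForm, mul_one,
      show ((d : ℕ) : MvPolynomial (Fin 2) ℂ) = C ((d : ℕ) : ℂ) by simp,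
      ← mul_assoc, ← C_mul, div_mul_cancel₀ _ hdnz]
  have hgh : (∑ k : Fin r₄, C (lam₄ k / d) * (linForm (β₄ k)) ^ d).IsHomogeneous d := by
    apply IsHomogeneous.sum
    intro k _
    simpa using (isHomogeneous_C (Fin 2) (lam₄ k / d)).mul ((isHomogeneous_linForm (β₄ k)).pow d)
  have hsubh : (f - ∑ k : Fin r₄, C (lam₄ k / d) * (linForm (β₄ k)) ^ d).IsHomogeneous d :=
    hf.sub hgh
  have hsubd : pderiv (0 : Fin 2)
      (f - ∑ k : Fin r₄, C (lam₄ k / d) * (linForm (β₄ k)) ^ d) = 0 := by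
    rw [map_sub, hpg, sub_self]
  obtain ⟨cc, hcc⟩ := eq_C_mul_Y_pow hsubh hsubd
  -- f = g + cc * y^d : a decomposition with r₄ + 1 linear forms
  have hdec₅ : f = ∑ k : Fin (r₄ + 1),
      C ((Fin.snoc (fun k => lam₄ k / d) cc : Fin (r₄+1) → ℂ) k) *
        ((Fin.snoc (fun k => linForm (β₄ k)) (X 1) : Fin (r₄+1) → MvPolynomial (Fin 2) ℂ) k) ^ d := by
    rw [Fin.sum_univ_castSucc]
    simp only [Fin.snoc_castSucc, Fin.snoc_last]
    have := sub_eq_iff_eq_add.mp hcc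
    rw [this]
    ring
  have hL₅h : ∀ k : Fin (r₄ + 1),
      (((Fin.snoc (fun k => linForm (β₄ k)) (X 1) : Fin (r₄+1) → MvPolynomial (Fin 2) ℂ)) k).IsHomogeneous 1 := by
    intro k
    refine Fin.lastCases ?_ ?_ k
    · simpa [Fin.snoc_last] using isHomogeneous_X ℂ (1 : Fin 2)
    · intro i
      simpa [Fin.snoc_castSucc] using isHomogeneous_linForm (β₄ i)
  obtain ⟨n₅, hn₅le, lam₆, L₆, hlam₆, hL₆, hdec₆⟩ :=
    drop_zeros (Fin.snoc (fun k => lam₄ k / d) cc : Fin (r₄+1) → ℂ)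
      (Fin.snoc (fun k => linForm (β₄ k)) (X 1) : Fin (r₄+1) → MvPolynomial (Fin 2) ℂ) hL₅h hdec₅
  have part3 : waringRank d f - 1 ≤ r₄ := by
    have : waringRank d f ≤ n₅ := Nat.sInf_le ⟨lam₆, L₆, hlam₆, hL₆, hdec₆⟩
    omega
  exact ⟨part1, part2, part3⟩
end
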